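/- Let 0 < α ≤ γ < 1, K ∈ (0,1], and [a,b] ⊂ (0,∞). Define, for H ∈ (0,1), φ(H,t) = ∫₀^∞ (e^{-θ t^{2H'}} - e^{-θ t^{2H}})² θ^{-(1+K)} dθ. Then there exists a finite constant C(α,γ,K) such that for all H,H' ∈ [α,γ] and all t ∈ [a,b], ∫₀^∞ (e^{-θ t^{2H'}} - e^{-θ t^{2H}})² θ^{-(1+K)} dθ ≤ C(α,γ,K)|H-H'|². -/

import Mathlib

open Real Set MeasureTheory

set_option maxHeartbeats 1000000

lemma exp_sub_exp_le' {u v : ℝ} (h : v ≤ u) :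
    Real.exp u - Real.exp v ≤ Real.exp u * (u - v) := by
  have h1 : (v - u) + 1 ≤ Real.exp (v - u) := Real.add_one_le_exp _
  have h2 : Real.exp v = Real.exp u * Real.exp (v - u) := by
    rw [← Real.exp_add]; ring_nf
  nlinarith [Real.exp_pos u]

theorem XHK_regularity_in_H (α γ K a b : ℝ) (hα : 0 < α) (hαγ : α ≤ γ) (hγ : γ < 1)
    (hK : K ∈ Set.Ioc (0:ℝ) 1) (ha : 0 < a) (hab : a ≤ b) :
    ∃ C : ℝ, 0 < C ∧ ∀ H H' : ℝ, H ∈ Set.Icc α γ → H' ∈ Set.Icc α γ →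
      ∀ t ∈ Set.Icc a b,
        (∫ θ in Set.Ioi (0:ℝ),
            (Real.exp (-(θ * t ^ (2 * H'))) - Real.exp (-(θ * t ^ (2 * H)))) ^ 2 *
              θ ^ (-(1 + K))) ≤ C * |H - H'| ^ 2 := by
  obtain ⟨hK0, hK1⟩ := hK
  have hb0 : 0 < b := lt_of_lt_of_le ha hab
  set m : ℝ := min 1 (a ^ (2 * γ)) with hm_def
  have hm : 0 < m := lt_min one_pos (Real.rpow_pos_of_pos ha _)
  set Mx : ℝ := max 1 (b ^ (2 * γ)) with hMx_def
  have hMx : 0 < Mx := lt_of_lt_of_le one_pos (le_max_left _ _)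
  set M : ℝ := 2 * Mx * (|Real.log a| + |Real.log b|) with hM_def
  have hM0 : 0 ≤ M := by positivity
  have hag : m ≤ Real.exp (Real.log a * (2 * γ)) := by
    refine le_trans (min_le_right _ _) ?_
    rw [Real.rpow_def_of_pos ha]
  have hbg : Real.exp (Real.log b * (2 * γ)) ≤ Mx := by
    refine le_trans ?_ (le_max_right _ _)
    rw [Real.rpow_def_of_pos hb0]
  have hm1 : m ≤ 1 := min_le_left _ _
  have h1Mx : (1:ℝ) ≤ Mx := le_max_left _ _
  -- integrability of the dominating function
  have hint : IntegrableOn (fun θ : ℝ => θ ^ (1 - K) * Real.exp (-(2 * m) * θ)) (Ioi 0) := by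
    have := integrableOn_rpow_mul_exp_neg_mul_rpow (p := 1) (s := 1 - K) (b := 2 * m)
      (by linarith) zero_lt_one (by linarith)
    refine this.congr_fun (fun x hx => ?_) measurableSet_Ioi
    simp only [Real.rpow_one]
  set I : ℝ := ∫ θ in Ioi (0:ℝ), θ ^ (1 - K) * Real.exp (-(2 * m) * θ) with hI_def
  have hI0 : 0 ≤ I := by
    apply setIntegral_nonneg measurableSet_Ioi
    intro θ hθ
    have hθ0 : 0 < θ := mem_Ioi.mp hθ
    positivity
  refine ⟨M ^ 2 * I + 1, by positivity, ?_⟩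
  intro H H' hH hH' t ht
  have ht0 : 0 < t := lt_of_lt_of_le ha ht.1
  have hrw : ∀ s : ℝ, t ^ (2 * s) = Real.exp (Real.log t * (2 * s)) :=
    fun s => Real.rpow_def_of_pos ht0 _
  have hlat : Real.log a ≤ Real.log t := Real.log_le_log ha ht.1
  have hltb : Real.log t ≤ Real.log b := Real.log_le_log ht0 ht.2
  -- bounds on t ^ (2*s) for s in [α, γ]
  have key : ∀ s : ℝ, s ∈ Set.Icc α γ →
      m ≤ Real.exp (Real.log t * (2 * s)) ∧ Real.exp (Real.log t * (2 * s)) ≤ Mx := by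
    intro s hs
    have hs0 : 0 < s := lt_of_lt_of_le hα hs.1
    have hsγ : s ≤ γ := hs.2
    constructor
    · rcases le_or_gt 0 (Real.log t) with hlt | hlt
      · refine le_trans hm1 ?_
        rw [show (1:ℝ) = Real.exp 0 from (Real.exp_zero).symm]
        exact Real.exp_le_exp.mpr (by nlinarith)
      · refine le_trans hag (Real.exp_le_exp.mpr ?_)
        nlinarith
    · rcases le_or_gt 0 (Real.log t) with hlt | hlt
      · refine le_trans (Real.exp_le_exp.mpr ?_) hbg
        nlinarith [le_trans hlat hltb]
      · refine le_trans ?_ h1Mx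
        rw [show (1:ℝ) = Real.exp 0 from (Real.exp_zero).symm]
        exact Real.exp_le_exp.mpr (by nlinarith)
  -- |t^(2H) - t^(2H')| ≤ M * |H - H'|
  have hlog : |Real.log t| ≤ |Real.log a| + |Real.log b| := by
    rw [abs_le]
    constructor
    · nlinarith [neg_abs_le (Real.log a), abs_nonneg (Real.log b)]
    · nlinarith [le_abs_self (Real.log b), abs_nonneg (Real.log a)]
  have haux : ∀ s s' : ℝ, s ∈ Set.Icc α γ → s' ∈ Set.Icc α γ →
      t ^ (2 * s) - t ^ (2 * s') ≤ M * |s - s'| := by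
    intro s s' hs hs'
    rw [hrw s, hrw s']
    rcases le_or_gt (Real.log t * (2 * s')) (Real.log t * (2 * s)) with hc | hc
    · refine le_trans (exp_sub_exp_le' hc) ?_
      have h1 : Real.exp (Real.log t * (2 * s)) ≤ Mx := (key s hs).2
      have h2 : Real.log t * (2 * s) - Real.log t * (2 * s') ≤
          2 * (|Real.log a| + |Real.log b|) * |s - s'| := by
        have e1 : Real.log t * (2 * s) - Real.log t * (2 * s') = 2 * ((s - s') * Real.log t) := by
          ring
        rw [e1]
        calc 2 * ((s - s') * Real.log t) ≤ 2 * |(s - s') * Real.log t| := by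
              nlinarith [le_abs_self ((s - s') * Real.log t)]
          _ = 2 * (|s - s'| * |Real.log t|) := by rw [abs_mul]
          _ ≤ 2 * (|Real.log a| + |Real.log b|) * |s - s'| := by
              nlinarith [abs_nonneg (s - s'), abs_nonneg (Real.log t)]
      calc Real.exp (Real.log t * (2 * s)) * (Real.log t * (2 * s) - Real.log t * (2 * s'))
          ≤ Mx * (2 * (|Real.log a| + |Real.log b|) * |s - s'|) := by
            have h3 : 0 ≤ Real.log t * (2 * s) - Real.log t * (2 * s') := by linarith
            nlinarith [Real.exp_pos (Real.log t * (2 * s))]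
        _ = M * |s - s'| := by rw [hM_def]; ring
    · have h4 : Real.exp (Real.log t * (2 * s)) - Real.exp (Real.log t * (2 * s')) ≤ 0 := by
        have := Real.exp_le_exp.mpr hc.le
        linarith
      refine le_trans h4 ?_
      positivity
  have diff_bound : |t ^ (2 * H) - t ^ (2 * H')| ≤ M * |H - H'| := by
    rw [abs_sub_le_iff]
    refine ⟨haux H H' hH hH', ?_⟩
    rw [abs_sub_comm]
    exact haux H' H hH' hH
  -- pointwise bound on the integrand
  have ptw : ∀ θ ∈ Ioi (0:ℝ),
      (Real.exp (-(θ * t ^ (2 * H'))) - Real.exp (-(θ * t ^ (2 * H)))) ^ 2 * θ ^ (-(1 + K)) ≤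
        (M * |H - H'|) ^ 2 * (θ ^ (1 - K) * Real.exp (-(2 * m) * θ)) := by
    intro θ hθ
    rw [mem_Ioi] at hθ
    have hxm : m ≤ t ^ (2 * H) := by rw [hrw]; exact (key H hH).1
    have hx'm : m ≤ t ^ (2 * H') := by rw [hrw]; exact (key H' hH').1
    set x := t ^ (2 * H)
    set x' := t ^ (2 * H')
    have main : ∀ y z : ℝ, m ≤ y → m ≤ z → y ≤ z →
        Real.exp (-(θ * y)) - Real.exp (-(θ * z)) ≤ θ * Real.exp (-(m * θ)) * (z - y) := by
      intro y z hy hz hyz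
      have hc : -(θ * z) ≤ -(θ * y) := by nlinarith
      refine le_trans (exp_sub_exp_le' hc) ?_
      have h1 : Real.exp (-(θ * y)) ≤ Real.exp (-(m * θ)) := by
        apply Real.exp_le_exp.mpr; nlinarith
      have h2 : -(θ * y) - -(θ * z) = θ * (z - y) := by ring
      rw [h2]
      have h3 : 0 ≤ θ * (z - y) := by nlinarith
      nlinarith [Real.exp_pos (-(θ * y)), Real.exp_pos (-(m * θ))]
    have habs : |Real.exp (-(θ * x')) - Real.exp (-(θ * x))| ≤
        θ * Real.exp (-(m * θ)) * (M * |H - H'|) := by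
      have hd1 : x - x' ≤ M * |H - H'| := le_trans (le_abs_self _) diff_bound
      have hd2 : x' - x ≤ M * |H - H'| := le_trans (neg_le_abs _ |>.trans_eq' (by ring)) diff_bound
      rw [abs_sub_le_iff]
      constructor
      · rcases le_or_gt x' x with hc | hc
        · refine le_trans (main x' x hx'm hxm hc) ?_
          exact mul_le_mul_of_nonneg_left hd1 (by positivity)
        · have h5 := Real.exp_le_exp.mpr
            (neg_le_neg (mul_le_mul_of_nonneg_left hc.le hθ.le))
          have h4 : 0 ≤ θ * Real.exp (-(m * θ)) * (M * |H - H'|) := by positivity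
          linarith
      · rcases le_or_gt x x' with hc | hc
        · refine le_trans (main x x' hxm hx'm hc) ?_
          exact mul_le_mul_of_nonneg_left hd2 (by positivity)
        · have h5 := Real.exp_le_exp.mpr
            (neg_le_neg (mul_le_mul_of_nonneg_left hc.le hθ.le))
          have h4 : 0 ≤ θ * Real.exp (-(m * θ)) * (M * |H - H'|) := by positivity
          linarith
    have hsq : (Real.exp (-(θ * x')) - Real.exp (-(θ * x))) ^ 2 ≤
        (θ * Real.exp (-(m * θ)) * (M * |H - H'|)) ^ 2 := by
      rw [← sq_abs]
      exact pow_le_pow_left₀ (abs_nonneg _) habs 2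
    have hθK : (0:ℝ) ≤ θ ^ (-(1 + K)) := le_of_lt (Real.rpow_pos_of_pos hθ _)
    calc (Real.exp (-(θ * x')) - Real.exp (-(θ * x))) ^ 2 * θ ^ (-(1 + K))
        ≤ (θ * Real.exp (-(m * θ)) * (M * |H - H'|)) ^ 2 * θ ^ (-(1 + K)) :=
          mul_le_mul_of_nonneg_right hsq hθK
      _ = (M * |H - H'|) ^ 2 * ((θ ^ (2:ℝ) * θ ^ (-(1 + K))) * Real.exp (-(m * θ)) ^ 2) := by
          rw [show (θ:ℝ) ^ (2:ℝ) = θ ^ (2:ℕ) from Real.rpow_natCast θ 2]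
          ring
      _ = (M * |H - H'|) ^ 2 * (θ ^ (1 - K) * Real.exp (-(2 * m) * θ)) := by
          rw [← Real.rpow_add hθ, ← Real.exp_nat_mul,
            show ((2:ℕ):ℝ) * -(m * θ) = -(2 * m) * θ by push_cast; ring,
            show (2:ℝ) + -(1 + K) = 1 - K by ring]
  -- conclude
  have step : (∫ θ in Ioi (0:ℝ),
      (Real.exp (-(θ * t ^ (2 * H'))) - Real.exp (-(θ * t ^ (2 * H)))) ^ 2 * θ ^ (-(1 + K))) ≤
      ∫ θ in Ioi (0:ℝ), (M * |H - H'|) ^ 2 * (θ ^ (1 - K) * Real.exp (-(2 * m) * θ)) := by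
    apply integral_mono_of_nonneg
    · filter_upwards [ae_restrict_mem measurableSet_Ioi] with θ hθ
      have hθ0 : 0 < θ := mem_Ioi.mp hθ
      positivity
    · exact hint.const_mul _
    · filter_upwards [ae_restrict_mem measurableSet_Ioi] with θ hθ
      exact ptw θ hθ
  rw [integral_const_mul] at step
  refine le_trans step ?_
  nlinarith [sq_nonneg M, sq_nonneg (H - H'), sq_abs (H - H'), abs_nonneg (H - H'),
    mul_nonneg (mul_nonneg (sq_nonneg M) hI0) (sq_nonneg (H - H'))]
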